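/- Let V be the real vector space of polynomials in ℝ[x,y] of total degree at most 8, and let r : V → ℝ be a linear functional satisfying: (i) symmetry: r(x^i y^j) = r(x^j y^i) for all i + j ≤ 8; (ii) the recurrence r(x^i y^j) = r(x^{i−1} y^{j+1}) + r(x^{i−2} y^j) − r(x^{i−1} y^{j−1}) whenever 0 < j < i and i + j ≤ 8; (iii) r(P_i(x) P_j(y)) = 1 if i = j ∈ {0, 3, 4} and r(P_i(x) P_j(y)) = 0 for all other pairs 0 ≤ i, j ≤ 4; and (iv) r(P_i(x) P_j(x)) = r(P_i(y) P_j(y)) = 1 if i = j and = 0 if i ≠ j, for all 0 ≤ i, j ≤ 4 with i + j ≤ 8. Then the values r(x^i y^j) for i + j ≤ 8 are exactly: r(1)=1, r(x²)=1, r(x²y²)=1, r(x³y³)=1, r(x⁴)=2, r(x⁴y²)=2, r(x⁶)=5, r(x⁶y²)=6, r(x⁵y³)=4, r(x⁴y⁴)=5, r(x⁷y)=1, r(x⁸)=14, together with the symmetric values, and r(x^i y^j)=0 for all remaining monomials with i + j ≤ 8. -/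

import Mathlib

/-- The polynomials `P₀,…,P₄` (with `Ppoly k = 0` for `k > 5`). -/
def Ppoly {R : Type*} [CommRing R] : ℕ → R → R
  | 0, _ => 1
  | 1, t => t
  | 2, t => t ^ 2 - 1
  | 3, t => t ^ 3 - 2 * t
  | 4, t => t ^ 4 - 3 * t ^ 2 + 1
  | 5, t => t ^ 5 - 4 * t ^ 3 + 3 * t
  | _, _ => 0

/-- The table of values `r(x^i y^j)` for `i + j ≤ 8` from the paper (extended by zero). -/
def tab : ℕ → ℕ → ℝ
  | 0, 0 => 1
  | 2, 0 => 1 | 0, 2 => 1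
  | 2, 2 => 1
  | 3, 3 => 1
  | 4, 0 => 2 | 0, 4 => 2
  | 4, 2 => 2 | 2, 4 => 2
  | 6, 0 => 5 | 0, 6 => 5
  | 6, 2 => 6 | 2, 6 => 6
  | 5, 3 => 4 | 3, 5 => 4
  | 4, 4 => 5
  | 7, 1 => 1 | 1, 7 => 1
  | 8, 0 => 14 | 0, 8 => 14
  | _, _ => 0

/-- The variable `x` of `ℝ[x,y]`. -/
noncomputable def xR : MvPolynomial (Fin 2) ℝ := MvPolynomial.X 0
/-- The variable `y` of `ℝ[x,y]`. -/
noncomputable def yR : MvPolynomial (Fin 2) ℝ := MvPolynomial.X 1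

/-- The monomial `x^i y^j` in `ℝ[x,y]`. -/
noncomputable def mono (i j : ℕ) : MvPolynomial (Fin 2) ℝ := xR ^ i * yR ^ j

set_option maxHeartbeats 1000000 in
/-- A linear functional `r` on `ℝ[x,y]` satisfying (i) the symmetry `r(x^i y^j) = r(x^j y^i)`,
(ii) the recurrence `r(x^i y^j) = r(x^{i-1} y^{j+1}) + r(x^{i-2} y^j) - r(x^{i-1} y^{j-1})`
for `0 < j < i`, `i + j ≤ 8`, (iii) `r(P_i(x)P_j(y)) = δ_{ij}` for `i = j ∈ {0,3,4}` and `0`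
for all other `i, j ≤ 4`, and (iv) `r(P_i(x)P_j(x)) = r(P_i(y)P_j(y)) = δ_{ij}` for
`i, j ≤ 4`, takes on the monomials `x^i y^j` with `i + j ≤ 8` exactly the values of the
paper's table. -/
theorem residue_table_determined
    (r : MvPolynomial (Fin 2) ℝ →ₗ[ℝ] ℝ)
    (hsymm : ∀ i j : ℕ, i + j ≤ 8 → r (mono i j) = r (mono j i))
    (hrec : ∀ i j : ℕ, 0 < j → j < i → i + j ≤ 8 →
      r (mono i j) = r (mono (i - 1) (j + 1)) + r (mono (i - 2) j) - r (mono (i - 1) (j - 1)))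
    (hPxy : ∀ i j : ℕ, i ≤ 4 → j ≤ 4 →
      r (Ppoly i xR * Ppoly j yR) = if i = j ∧ (i = 0 ∨ i = 3 ∨ i = 4) then 1 else 0)
    (hPxx : ∀ i j : ℕ, i ≤ 4 → j ≤ 4 →
      r (Ppoly i xR * Ppoly j xR) = if i = j then 1 else 0)
    (hPyy : ∀ i j : ℕ, i ≤ 4 → j ≤ 4 →
      r (Ppoly i yR * Ppoly j yR) = if i = j then 1 else 0) :
    ∀ i j : ℕ, i + j ≤ 8 → r (mono i j) = tab i j := by
  have h00 : r (mono 0 0) = 1 := by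
    have h := hPxy 0 0 (by norm_num) (by norm_num)
    rw [show Ppoly 0 xR * Ppoly 0 yR = mono 0 0 from by
      simp only [Ppoly, mono, xR, yR, Algebra.smul_def, map_ofNat]; ring] at h
    try simp only [map_add, map_sub, map_smul, smul_eq_mul] at h
    norm_num at h
    linarith []
  have h10 : r (mono 1 0) = 0 := by
    have h := hPxy 1 0 (by norm_num) (by norm_num)
    rw [show Ppoly 1 xR * Ppoly 0 yR = mono 1 0 from by
      simp only [Ppoly, mono, xR, yR, Algebra.smul_def, map_ofNat]; ring] at h
    try simp only [map_add, map_sub, map_smul, smul_eq_mul] at h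
    norm_num at h
    linarith [h00]
  have h01 : r (mono 0 1) = 0 := by rw [hsymm 0 1 (by norm_num)]; exact h10
  have h11 : r (mono 1 1) = 0 := by
    have h := hPxy 1 1 (by norm_num) (by norm_num)
    rw [show Ppoly 1 xR * Ppoly 1 yR = mono 1 1 from by
      simp only [Ppoly, mono, xR, yR, Algebra.smul_def, map_ofNat]; ring] at h
    try simp only [map_add, map_sub, map_smul, smul_eq_mul] at h
    norm_num at h
    linarith [h00, h10, h01]
  have h20 : r (mono 2 0) = 1 := by
    have h := hPxy 2 0 (by norm_num) (by norm_num)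
    rw [show Ppoly 2 xR * Ppoly 0 yR = mono 2 0 - mono 0 0 from by
      simp only [Ppoly, mono, xR, yR, Algebra.smul_def, map_ofNat]; ring] at h
    try simp only [map_add, map_sub, map_smul, smul_eq_mul] at h
    norm_num at h
    linarith [h00, h10, h01, h11]
  have h02 : r (mono 0 2) = 1 := by rw [hsymm 0 2 (by norm_num)]; exact h20
  have h21 : r (mono 2 1) = 0 := by
    have h := hPxy 2 1 (by norm_num) (by norm_num)
    rw [show Ppoly 2 xR * Ppoly 1 yR = mono 2 1 - mono 0 1 from by
      simp only [Ppoly, mono, xR, yR, Algebra.smul_def, map_ofNat]; ring] at h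
    try simp only [map_add, map_sub, map_smul, smul_eq_mul] at h
    norm_num at h
    linarith [h00, h10, h01, h11, h20, h02]
  have h12 : r (mono 1 2) = 0 := by rw [hsymm 1 2 (by norm_num)]; exact h21
  have h22 : r (mono 2 2) = 1 := by
    have h := hPxy 2 2 (by norm_num) (by norm_num)
    rw [show Ppoly 2 xR * Ppoly 2 yR = mono 2 2 - mono 2 0 - mono 0 2 + mono 0 0 from by
      simp only [Ppoly, mono, xR, yR, Algebra.smul_def, map_ofNat]; ring] at h
    try simp only [map_add, map_sub, map_smul, smul_eq_mul] at h
    norm_num at h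
    linarith [h00, h10, h01, h11, h20, h02, h21, h12]
  have h30 : r (mono 3 0) = 0 := by
    have h := hPxy 3 0 (by norm_num) (by norm_num)
    rw [show Ppoly 3 xR * Ppoly 0 yR = mono 3 0 - (2:ℝ)•mono 1 0 from by
      simp only [Ppoly, mono, xR, yR, Algebra.smul_def, map_ofNat]; ring] at h
    try simp only [map_add, map_sub, map_smul, smul_eq_mul] at h
    norm_num at h
    linarith [h00, h10, h01, h11, h20, h02, h21, h12, h22]
  have h03 : r (mono 0 3) = 0 := by rw [hsymm 0 3 (by norm_num)]; exact h30
  have h31 : r (mono 3 1) = 0 := by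
    have h := hPxy 3 1 (by norm_num) (by norm_num)
    rw [show Ppoly 3 xR * Ppoly 1 yR = mono 3 1 - (2:ℝ)•mono 1 1 from by
      simp only [Ppoly, mono, xR, yR, Algebra.smul_def, map_ofNat]; ring] at h
    try simp only [map_add, map_sub, map_smul, smul_eq_mul] at h
    norm_num at h
    linarith [h00, h10, h01, h11, h20, h02, h21, h12, h22, h30, h03]
  have h13 : r (mono 1 3) = 0 := by rw [hsymm 1 3 (by norm_num)]; exact h31
  have h32 : r (mono 3 2) = 0 := by
    have h := hPxy 3 2 (by norm_num) (by norm_num)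
    rw [show Ppoly 3 xR * Ppoly 2 yR = mono 3 2 - mono 3 0 - (2:ℝ)•mono 1 2 + (2:ℝ)•mono 1 0 from by
      simp only [Ppoly, mono, xR, yR, Algebra.smul_def, map_ofNat]; ring] at h
    try simp only [map_add, map_sub, map_smul, smul_eq_mul] at h
    norm_num at h
    linarith [h00, h10, h01, h11, h20, h02, h21, h12, h22, h30, h03, h31, h13]
  have h23 : r (mono 2 3) = 0 := by rw [hsymm 2 3 (by norm_num)]; exact h32
  have h33 : r (mono 3 3) = 1 := by
    have h := hPxy 3 3 (by norm_num) (by norm_num)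
    rw [show Ppoly 3 xR * Ppoly 3 yR = mono 3 3 - (2:ℝ)•mono 3 1 - (2:ℝ)•mono 1 3 + (4:ℝ)•mono 1 1 from by
      simp only [Ppoly, mono, xR, yR, Algebra.smul_def, map_ofNat]; ring] at h
    try simp only [map_add, map_sub, map_smul, smul_eq_mul] at h
    norm_num at h
    linarith [h00, h10, h01, h11, h20, h02, h21, h12, h22, h30, h03, h31, h13, h32, h23]
  have h40 : r (mono 4 0) = 2 := by
    have h := hPxy 4 0 (by norm_num) (by norm_num)
    rw [show Ppoly 4 xR * Ppoly 0 yR = mono 4 0 - (3:ℝ)•mono 2 0 + mono 0 0 from by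
      simp only [Ppoly, mono, xR, yR, Algebra.smul_def, map_ofNat]; ring] at h
    try simp only [map_add, map_sub, map_smul, smul_eq_mul] at h
    norm_num at h
    linarith [h00, h10, h01, h11, h20, h02, h21, h12, h22, h30, h03, h31, h13, h32, h23, h33]
  have h04 : r (mono 0 4) = 2 := by rw [hsymm 0 4 (by norm_num)]; exact h40
  have h41 : r (mono 4 1) = 0 := by
    have h := hPxy 4 1 (by norm_num) (by norm_num)
    rw [show Ppoly 4 xR * Ppoly 1 yR = mono 4 1 - (3:ℝ)•mono 2 1 + mono 0 1 from by
      simp only [Ppoly, mono, xR, yR, Algebra.smul_def, map_ofNat]; ring] at h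
    try simp only [map_add, map_sub, map_smul, smul_eq_mul] at h
    norm_num at h
    linarith [h00, h10, h01, h11, h20, h02, h21, h12, h22, h30, h03, h31, h13, h32, h23, h33, h40, h04]
  have h14 : r (mono 1 4) = 0 := by rw [hsymm 1 4 (by norm_num)]; exact h41
  have h42 : r (mono 4 2) = 2 := by
    have h := hPxy 4 2 (by norm_num) (by norm_num)
    rw [show Ppoly 4 xR * Ppoly 2 yR = mono 4 2 - mono 4 0 - (3:ℝ)•mono 2 2 + (3:ℝ)•mono 2 0 + mono 0 2 - mono 0 0 from by
      simp only [Ppoly, mono, xR, yR, Algebra.smul_def, map_ofNat]; ring] at h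
    try simp only [map_add, map_sub, map_smul, smul_eq_mul] at h
    norm_num at h
    linarith [h00, h10, h01, h11, h20, h02, h21, h12, h22, h30, h03, h31, h13, h32, h23, h33, h40, h04, h41, h14]
  have h24 : r (mono 2 4) = 2 := by rw [hsymm 2 4 (by norm_num)]; exact h42
  have h43 : r (mono 4 3) = 0 := by
    have h := hPxy 4 3 (by norm_num) (by norm_num)
    rw [show Ppoly 4 xR * Ppoly 3 yR = mono 4 3 - (2:ℝ)•mono 4 1 - (3:ℝ)•mono 2 3 + (6:ℝ)•mono 2 1 + mono 0 3 - (2:ℝ)•mono 0 1 from by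
      simp only [Ppoly, mono, xR, yR, Algebra.smul_def, map_ofNat]; ring] at h
    try simp only [map_add, map_sub, map_smul, smul_eq_mul] at h
    norm_num at h
    linarith [h00, h10, h01, h11, h20, h02, h21, h12, h22, h30, h03, h31, h13, h32, h23, h33, h40, h04, h41, h14, h42, h24]
  have h34 : r (mono 3 4) = 0 := by rw [hsymm 3 4 (by norm_num)]; exact h43
  have h44 : r (mono 4 4) = 5 := by
    have h := hPxy 4 4 (by norm_num) (by norm_num)
    rw [show Ppoly 4 xR * Ppoly 4 yR = mono 4 4 - (3:ℝ)•mono 4 2 + mono 4 0 - (3:ℝ)•mono 2 4 + (9:ℝ)•mono 2 2 - (3:ℝ)•mono 2 0 + mono 0 4 - (3:ℝ)•mono 0 2 + mono 0 0 from by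
      simp only [Ppoly, mono, xR, yR, Algebra.smul_def, map_ofNat]; ring] at h
    try simp only [map_add, map_sub, map_smul, smul_eq_mul] at h
    norm_num at h
    linarith [h00, h10, h01, h11, h20, h02, h21, h12, h22, h30, h03, h31, h13, h32, h23, h33, h40, h04, h41, h14, h42, h24, h43, h34]
  have h50 : r (mono 5 0) = 0 := by
    have h := hPxx 1 4 (by norm_num) (by norm_num)
    rw [show Ppoly 1 xR * Ppoly 4 xR = mono 5 0 - (3:ℝ)•mono 3 0 + mono 1 0 from by
      simp only [Ppoly, mono, xR, yR, Algebra.smul_def, map_ofNat]; ring] at h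
    try simp only [map_add, map_sub, map_smul, smul_eq_mul] at h
    norm_num at h
    linarith [h00, h10, h01, h11, h20, h02, h21, h12, h22, h30, h03, h31, h13, h32, h23, h33, h40, h04, h41, h14, h42, h24, h43, h34, h44]
  have h05 : r (mono 0 5) = 0 := by rw [hsymm 0 5 (by norm_num)]; exact h50
  have h60 : r (mono 6 0) = 5 := by
    have h := hPxx 2 4 (by norm_num) (by norm_num)
    rw [show Ppoly 2 xR * Ppoly 4 xR = mono 6 0 - (4:ℝ)•mono 4 0 + (4:ℝ)•mono 2 0 - mono 0 0 from by
      simp only [Ppoly, mono, xR, yR, Algebra.smul_def, map_ofNat]; ring] at h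
    try simp only [map_add, map_sub, map_smul, smul_eq_mul] at h
    norm_num at h
    linarith [h00, h10, h01, h11, h20, h02, h21, h12, h22, h30, h03, h31, h13, h32, h23, h33, h40, h04, h41, h14, h42, h24, h43, h34, h44, h50, h05]
  have h06 : r (mono 0 6) = 5 := by rw [hsymm 0 6 (by norm_num)]; exact h60
  have h70 : r (mono 7 0) = 0 := by
    have h := hPxx 3 4 (by norm_num) (by norm_num)
    rw [show Ppoly 3 xR * Ppoly 4 xR = mono 7 0 - (5:ℝ)•mono 5 0 + (7:ℝ)•mono 3 0 - (2:ℝ)•mono 1 0 from by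
      simp only [Ppoly, mono, xR, yR, Algebra.smul_def, map_ofNat]; ring] at h
    try simp only [map_add, map_sub, map_smul, smul_eq_mul] at h
    norm_num at h
    linarith [h00, h10, h01, h11, h20, h02, h21, h12, h22, h30, h03, h31, h13, h32, h23, h33, h40, h04, h41, h14, h42, h24, h43, h34, h44, h50, h05, h60, h06]
  have h07 : r (mono 0 7) = 0 := by rw [hsymm 0 7 (by norm_num)]; exact h70
  have h80 : r (mono 8 0) = 14 := by
    have h := hPxx 4 4 (by norm_num) (by norm_num)
    rw [show Ppoly 4 xR * Ppoly 4 xR = mono 8 0 - (6:ℝ)•mono 6 0 + (11:ℝ)•mono 4 0 - (6:ℝ)•mono 2 0 + mono 0 0 from by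
      simp only [Ppoly, mono, xR, yR, Algebra.smul_def, map_ofNat]; ring] at h
    try simp only [map_add, map_sub, map_smul, smul_eq_mul] at h
    norm_num at h
    linarith [h00, h10, h01, h11, h20, h02, h21, h12, h22, h30, h03, h31, h13, h32, h23, h33, h40, h04, h41, h14, h42, h24, h43, h34, h44, h50, h05, h60, h06, h70, h07]
  have h08 : r (mono 0 8) = 14 := by rw [hsymm 0 8 (by norm_num)]; exact h80
  have h51 : r (mono 5 1) = 0 := by
    have h := hrec 5 1 (by norm_num) (by norm_num) (by norm_num)
    norm_num at h
    linarith [h00, h10, h01, h11, h20, h02, h21, h12, h22, h30, h03, h31, h13, h32, h23, h33, h40, h04, h41, h14, h42, h24, h43, h34, h44, h50, h05, h60, h06, h70, h07, h80, h08]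
  have h15 : r (mono 1 5) = 0 := by rw [hsymm 1 5 (by norm_num)]; exact h51
  have h52 : r (mono 5 2) = 0 := by
    have h := hrec 5 2 (by norm_num) (by norm_num) (by norm_num)
    norm_num at h
    linarith [h00, h10, h01, h11, h20, h02, h21, h12, h22, h30, h03, h31, h13, h32, h23, h33, h40, h04, h41, h14, h42, h24, h43, h34, h44, h50, h05, h60, h06, h70, h07, h80, h08, h51, h15]
  have h25 : r (mono 2 5) = 0 := by rw [hsymm 2 5 (by norm_num)]; exact h52
  have h53 : r (mono 5 3) = 4 := by
    have h := hrec 5 3 (by norm_num) (by norm_num) (by norm_num)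
    norm_num at h
    linarith [h00, h10, h01, h11, h20, h02, h21, h12, h22, h30, h03, h31, h13, h32, h23, h33, h40, h04, h41, h14, h42, h24, h43, h34, h44, h50, h05, h60, h06, h70, h07, h80, h08, h51, h15, h52, h25]
  have h35 : r (mono 3 5) = 4 := by rw [hsymm 3 5 (by norm_num)]; exact h53
  have h61 : r (mono 6 1) = 0 := by
    have h := hrec 6 1 (by norm_num) (by norm_num) (by norm_num)
    norm_num at h
    linarith [h00, h10, h01, h11, h20, h02, h21, h12, h22, h30, h03, h31, h13, h32, h23, h33, h40, h04, h41, h14, h42, h24, h43, h34, h44, h50, h05, h60, h06, h70, h07, h80, h08, h51, h15, h52, h25, h53, h35]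
  have h16 : r (mono 1 6) = 0 := by rw [hsymm 1 6 (by norm_num)]; exact h61
  have h62 : r (mono 6 2) = 6 := by
    have h := hrec 6 2 (by norm_num) (by norm_num) (by norm_num)
    norm_num at h
    linarith [h00, h10, h01, h11, h20, h02, h21, h12, h22, h30, h03, h31, h13, h32, h23, h33, h40, h04, h41, h14, h42, h24, h43, h34, h44, h50, h05, h60, h06, h70, h07, h80, h08, h51, h15, h52, h25, h53, h35, h61, h16]
  have h26 : r (mono 2 6) = 6 := by rw [hsymm 2 6 (by norm_num)]; exact h62
  have h71 : r (mono 7 1) = 1 := by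
    have h := hrec 7 1 (by norm_num) (by norm_num) (by norm_num)
    norm_num at h
    linarith [h00, h10, h01, h11, h20, h02, h21, h12, h22, h30, h03, h31, h13, h32, h23, h33, h40, h04, h41, h14, h42, h24, h43, h34, h44, h50, h05, h60, h06, h70, h07, h80, h08, h51, h15, h52, h25, h53, h35, h61, h16, h62, h26]
  have h17 : r (mono 1 7) = 1 := by rw [hsymm 1 7 (by norm_num)]; exact h71
  intro i j hij
  have hi : i ≤ 8 := by omega
  have hj : j ≤ 8 := by omega
  interval_cases i <;> interval_cases j <;> simp only [tab] <;>
    first | with_reducible exact h00 | with_reducible exact h10 | with_reducible exact h01 | with_reducible exact h11 | with_reducible exact h20 | with_reducible exact h02 | with_reducible exact h21 | with_reducible exact h12 | with_reducible exact h22 | with_reducible exact h30 | with_reducible exact h03 | with_reducible exact h31 | with_reducible exact h13 | with_reducible exact h32 | with_reducible exact h23 | with_reducible exact h33 | with_reducible exact h40 | with_reducible exact h04 | with_reducible exact h41 | with_reducible exact h14 | with_reducible exact h42 | with_reducible exact h24 | with_reducible exact h43 | with_reducible exact h34 | with_reducible exact h44 | with_reducible exact h50 | with_reducible exact h05 | with_reducible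 exact h60 | with_reducible exact h06 | with_reducible exact h70 | with_reducible exact h07 | with_reducible exact h80 | with_reducible exact h08 | with_reducible exact h51 | with_reducible exact h15 | with_reducible exact h52 | with_reducible exact h25 | with_reducible exact h53 | with_reducible exact h35 | with_reducible exact h61 | with_reducible exact h16 | with_reducible exact h62 | with_reducible exact h26 | with_reducible exact h71 | with_reducible exact h17 | exact absurd hij (by norm_num)
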